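/- Let A be an abelian category with enough injectives, let (W, F) be an injective cotorsion pair, and let W' be a thick class of objects of A containing W. Then an object A lies in W' if and only if there exists a short exact sequence 0 → A → T → W → 0 with T ∈ W' ∩ F and W ∈ W. (That is, W_{W' ∩ F} = W'.) -/
import Mathlib


open CategoryTheory CategoryTheory.Limits

universe w v u

variable {A : Type u} [Category.{v} A] [Abelian A]

/-- `IsShortExact i p` asserts that `0 → X → Y → Z → 0` is a short exact sequence. -/
def IsShortExact {X Y Z : A} (i : X ⟶ Y) (p : Y ⟶ Z) : Prop :=
  ∃ w : i ≫ p = 0, (ShortComplex.mk i p w).ShortExact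

section Ext

variable [HasExt.{w} A]

/-- `Ext¹(X, Y) = 0`. -/
def Ext1Zero (X Y : A) : Prop := Subsingleton (Abelian.Ext X Y 1)

/-- `(F, C)` is a cotorsion pair: each class is the `Ext¹`-orthogonal of the other. -/
def IsCotorsionPair (F C : Set A) : Prop :=
  (∀ X : A, X ∈ F ↔ ∀ Y ∈ C, Ext1Zero.{w} X Y) ∧
  (∀ Y : A, Y ∈ C ↔ ∀ X ∈ F, Ext1Zero.{w} X Y)

/-- A complete cotorsion pair: for every object `X` there are short exact sequences
`0 → C → F → X → 0` and `0 → X → C' → F' → 0` with `F, F'` in the left class and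
`C, C'` in the right class. -/
def IsCompleteCotorsionPair (F C : Set A) : Prop :=
  IsCotorsionPair.{w} F C ∧
  (∀ X : A, ∃ (Co Fo : A) (i : Co ⟶ Fo) (p : Fo ⟶ X),
    Co ∈ C ∧ Fo ∈ F ∧ IsShortExact i p) ∧
  (∀ X : A, ∃ (Co Fo : A) (i : X ⟶ Co) (p : Co ⟶ Fo),
    Co ∈ C ∧ Fo ∈ F ∧ IsShortExact i p)

end Ext

/-- A thick class: closed under direct summands (retracts) and satisfying two-out-of-three
for short exact sequences. -/
def IsThickClass (W : Set A) : Prop :=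
  (∀ (X Y : A) (s : Y ⟶ X) (r : X ⟶ Y), s ≫ r = 𝟙 Y → X ∈ W → Y ∈ W) ∧
  (∀ ⦃X Y Z : A⦄ (i : X ⟶ Y) (p : Y ⟶ Z), IsShortExact i p →
    (X ∈ W → Y ∈ W → Z ∈ W) ∧ (X ∈ W → Z ∈ W → Y ∈ W) ∧ (Y ∈ W → Z ∈ W → X ∈ W))

/-- The class `F` is closed under kernels of epimorphisms between objects of `F`. -/
def ClosedUnderKernelsOfEpis (F : Set A) : Prop :=
  ∀ ⦃X Y Z : A⦄ (i : X ⟶ Y) (p : Y ⟶ Z), IsShortExact i p → Y ∈ F → Z ∈ F → X ∈ F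

/-- The class `C` is closed under cokernels of monomorphisms between objects of `C`. -/
def ClosedUnderCokernelsOfMonos (C : Set A) : Prop :=
  ∀ ⦃X Y Z : A⦄ (i : X ⟶ Y) (p : Y ⟶ Z), IsShortExact i p → X ∈ C → Y ∈ C → Z ∈ C

/-- An injective cotorsion pair: a complete cotorsion pair `(W, F)` with `W` thick and
`W ∩ F` equal to the class of injective objects. -/
def IsInjectiveCotorsionPair [HasExt.{w} A] (W F : Set A) : Prop :=
  IsCompleteCotorsionPair.{w} W F ∧ IsThickClass W ∧
  ∀ X : A, (X ∈ W ∧ X ∈ F) ↔ Injective X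

/-- A projective cotorsion pair: a complete cotorsion pair `(C, W)` with `W` thick and
`C ∩ W` equal to the class of projective objects. -/
def IsProjectiveCotorsionPair [HasExt.{w} A] (C W : Set A) : Prop :=
  IsCompleteCotorsionPair.{w} C W ∧ IsThickClass W ∧
  ∀ X : A, (X ∈ C ∧ X ∈ W) ↔ Projective X

/-- A Hovey triple `(Q, W, R)`: `W` is thick and both `(Q, W ∩ R)` and `(Q ∩ W, R)` are
complete cotorsion pairs. -/
def IsHoveyTriple [HasExt.{w} A] (Q W R : Set A) : Prop :=
  IsThickClass W ∧ IsCompleteCotorsionPair.{w} Q (W ∩ R) ∧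
    IsCompleteCotorsionPair.{w} (Q ∩ W) R

/-- `T` is an `F`-thick class: a subclass of `F` closed under direct summands and satisfying
two-out-of-three on short exact sequences all of whose terms lie in `F`. -/
def IsFThick (F T : Set A) : Prop :=
  (∀ (X Y : A) (s : Y ⟶ X) (r : X ⟶ Y), s ≫ r = 𝟙 Y → X ∈ T → Y ∈ T) ∧
  (∀ ⦃X Y Z : A⦄ (i : X ⟶ Y) (p : Y ⟶ Z), IsShortExact i p →
    X ∈ F → Y ∈ F → Z ∈ F →
    ((X ∈ T → Y ∈ T → Z ∈ T) ∧ (X ∈ T → Z ∈ T → Y ∈ T) ∧ (Y ∈ T → Z ∈ T → X ∈ T)))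

/-- `WClass W T` is the class of all objects `X` admitting a short exact sequence
`0 → X → T₀ → W₀ → 0` with `T₀ ∈ T` and `W₀ ∈ W`. -/
def WClass (W T : Set A) : Set A :=
  {X : A | ∃ (To Wo : A) (i : X ⟶ To) (p : To ⟶ Wo), IsShortExact i p ∧ To ∈ T ∧ Wo ∈ W}

theorem WClass_of_thick_class [EnoughInjectives A] [HasExt.{w} A] (W F : Set A)
    (h : IsInjectiveCotorsionPair.{w} W F)
    (W' : Set A) (hthick : IsThickClass W') (hsub : W ⊆ W') :
    ∀ X : A, X ∈ W' ↔ ∃ (To Wo : A) (i : X ⟶ To) (p : To ⟶ Wo),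
      IsShortExact i p ∧ (To ∈ W' ∧ To ∈ F) ∧ Wo ∈ W := by
  intro X
  constructor
  · intro hX
    obtain ⟨Co, Fo, i, p, hCo, hFo, hse⟩ := h.1.2.2 X
    exact ⟨Co, Fo, i, p, hse, ⟨(hthick.2 i p hse).2.1 hX (hsub hFo), hCo⟩, hFo⟩
  · rintro ⟨To, Wo, i, p, hse, ⟨hT, _⟩, hWo⟩
    exact (hthick.2 i p hse).2.2 hT (hsub hWo)
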